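/- arXiv:1811.08054 — 2 statements merged into one kernel-verified Lean document; each statement's English description precedes it below -/
import Mathlib

section
/- Let K be a field of characteristic zero and J ⊆ K[x₁,…,xₙ] an ideal. Let P be a K-linear differential operator on K[x] such that P(gⱼ) ∈ √J for a generating set g₁,…,g_μ of J, and such that for every variable xᵢ the commutator [P, xᵢ] maps all of J into √J. Then P maps all of J into √J. -/
open MvPolynomial

theorem maps_ideal_to_radical_of_generators_and_commutators
    (K : Type*) [Field K] [CharZero K] (n μ : ℕ)
    (g : Fin μ → MvPolynomial (Fin n) K)
    (J : Ideal (MvPolynomial (Fin n) K))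
    (hJ : J = Ideal.span (Set.range g))
    (P : MvPolynomial (Fin n) K →ₗ[K] MvPolynomial (Fin n) K)
    (hgen : ∀ j, P (g j) ∈ J.radical)
    (hcomm : ∀ (i : Fin n), ∀ h ∈ J, P (X i * h) - X i * P h ∈ J.radical) :
    ∀ h ∈ J, P h ∈ J.radical := by
  have key : ∀ (p h : MvPolynomial (Fin n) K), h ∈ J → P h ∈ J.radical →
      P (p * h) ∈ J.radical := by
    intro p
    induction p using MvPolynomial.induction_on with
    | C a =>
      intro h hh hPh
      have : C a * h = a • h := by rw [MvPolynomial.smul_eq_C_mul]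
      rw [this, map_smul, MvPolynomial.smul_eq_C_mul]
      exact Ideal.mul_mem_left _ _ hPh
    | add p q hp hq =>
      intro h hh hPh
      rw [add_mul, map_add]
      exact Ideal.add_mem _ (hp h hh hPh) (hq h hh hPh)
    | mul_X p i hp =>
      intro h hh hPh
      have hph : p * h ∈ J := J.mul_mem_left p hh
      have h1 : P (X i * (p * h)) - X i * P (p * h) ∈ J.radical := hcomm i _ hph
      have h2 : X i * P (p * h) ∈ J.radical :=
        Ideal.mul_mem_left _ _ (hp h hh hPh)
      have : p * X i * h = X i * (p * h) := by ring
      rw [this]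
      have := Ideal.add_mem _ h1 h2
      simpa using this
  intro h hh
  rw [hJ] at hh
  induction hh using Submodule.span_induction with
  | mem x hx =>
    obtain ⟨j, rfl⟩ := hx
    exact hgen j
  | zero => simp
  | add x y hx hy ihx ihy =>
    rw [map_add]; exact Ideal.add_mem _ ihx ihy
  | smul p x hx ih =>
    have hxJ : x ∈ J := hJ ▸ hx
    rw [smul_eq_mul]
    exact key p x hxJ ih
end

section
/- Let K be a field of characteristic zero and consider operators on K[x,y] generated by multiplication operators and ∂_x, ∂_y. For J = ⟨f₁, f₂⟩ with f₁ = (x²−2)(x⁴−4x²−y⁴−5y³−9y²−7y+2) and f₂ = x⁴−4x²−y³−3y²−3y+3: the radical is √J = ⟨x²−2, y+1⟩, and dim_K K[x,y]/√J = 2. -/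
open MvPolynomial

noncomputable section

lemma sq_ne_two (b : ℚ) : b ^ 2 ≠ 2 := by
  intro h
  have h2 : ((b:ℝ)) ^ 2 = 2 := by exact_mod_cast h
  have hirr : Irrational (Real.sqrt 2) := irrational_sqrt_two
  have hb : Real.sqrt 2 = |(b:ℝ)| := by
    rw [show (2:ℝ) = (b:ℝ)^2 from h2.symm, Real.sqrt_sq_eq_abs]
  rw [hb] at hirr
  rcases abs_cases (b:ℝ) with ⟨he, _⟩ | ⟨he, _⟩
  · exact hirr ⟨b, he.symm⟩
  · exact hirr ⟨-b, by push_cast; exact he.symm⟩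

abbrev q2 : Polynomial ℚ := Polynomial.X ^ 2 - Polynomial.C (2:ℚ)

lemma irred : Irreducible q2 :=
  X_pow_sub_C_irreducible_of_prime Nat.prime_two sq_ne_two

instance : Fact (Irreducible q2) := ⟨irred⟩

abbrev Rid : Ideal (MvPolynomial (Fin 2) ℚ) :=
  Ideal.span {X 0 ^ 2 - 2, X 1 + 1}

-- forward map
def φ : MvPolynomial (Fin 2) ℚ →ₐ[ℚ] AdjoinRoot q2 :=
  aeval ![AdjoinRoot.root q2, -1]

lemma Rid_le_ker : Rid ≤ RingHom.ker φ.toRingHom := by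
  rw [Ideal.span_le]
  rintro p hp
  simp only [Set.mem_insert_iff, Set.mem_singleton_iff] at hp
  rcases hp with rfl | rfl <;>
    simp [RingHom.mem_ker, φ, map_sub, map_add, map_pow, map_ofNat]
  · have := AdjoinRoot.isRoot_root q2
    have h2 : (AdjoinRoot.root q2) ^ 2 = 2 := by
      have := AdjoinRoot.eval₂_root q2
      simpa [q2, sub_eq_zero] using this
    simp [h2]

def φbar : (MvPolynomial (Fin 2) ℚ ⧸ Rid) →ₐ[ℚ] AdjoinRoot q2 :=
  Ideal.Quotient.liftₐ Rid φ (fun _ ha => Rid_le_ker ha)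

lemma mk_x_sq : (Ideal.Quotient.mk Rid (X 0)) ^ 2 - 2 = 0 := by
  rw [← map_pow, ← map_ofNat (Ideal.Quotient.mk Rid) 2, ← map_sub,
    Ideal.Quotient.eq_zero_iff_mem]
  exact Ideal.subset_span (by simp)

def ψ : AdjoinRoot q2 →ₐ[ℚ] (MvPolynomial (Fin 2) ℚ ⧸ Rid) :=
  AdjoinRoot.liftAlgHom q2 (Algebra.ofId ℚ _) (Ideal.Quotient.mk Rid (X 0)) (show Polynomial.aeval (Ideal.Quotient.mk Rid (X 0)) q2 = 0 by
    simp only [q2, map_sub, map_pow, Polynomial.aeval_X, Polynomial.aeval_C,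
      map_ofNat]
    exact mk_x_sq)

lemma φbar_mk (p : MvPolynomial (Fin 2) ℚ) : φbar (Ideal.Quotient.mk Rid p) = φ p := rfl

lemma ψ_root : ψ (AdjoinRoot.root q2) = Ideal.Quotient.mk Rid (X 0) :=
  AdjoinRoot.liftAlgHom_root _ _ _ _

lemma mk_y : (Ideal.Quotient.mk Rid (X 1)) = -1 := by
  have : (Ideal.Quotient.mk Rid (X 1)) + 1 = 0 := by
    rw [← map_one (Ideal.Quotient.mk Rid), ← map_add, Ideal.Quotient.eq_zero_iff_mem]
    exact Ideal.subset_span (by simp)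
  linear_combination this

lemma comp1 : ψ.comp φbar = AlgHom.id ℚ _ := by
  apply Ideal.Quotient.algHom_ext
  apply MvPolynomial.algHom_ext
  intro i
  fin_cases i
  · show ψ (φbar (Ideal.Quotient.mk Rid (X 0))) = Ideal.Quotient.mk Rid (X 0)
    simp [φbar_mk, φ, ψ_root, mk_y]
  · show ψ (φbar (Ideal.Quotient.mk Rid (X 1))) = Ideal.Quotient.mk Rid (X 1)
    simp [φbar_mk, φ, ψ_root, mk_y]

lemma comp2 : φbar.comp ψ = AlgHom.id ℚ _ := by
  apply AdjoinRoot.algHom_ext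
  show φbar (ψ (AdjoinRoot.root q2)) = AdjoinRoot.root q2
  simp [φbar_mk, φ, ψ_root]

def e : (MvPolynomial (Fin 2) ℚ ⧸ Rid) ≃ₐ[ℚ] AdjoinRoot q2 :=
  AlgEquiv.ofAlgHom φbar ψ comp2 comp1

lemma isfield_quot : IsField (MvPolynomial (Fin 2) ℚ ⧸ Rid) :=
  e.toMulEquiv.isField (Field.toIsField (AdjoinRoot q2))

lemma Rid_max : Rid.IsMaximal := Ideal.Quotient.maximal_of_isField _ isfield_quot

lemma q2_ne : q2 ≠ 0 := irred.ne_zero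

lemma finrank_quot : Module.finrank ℚ (MvPolynomial (Fin 2) ℚ ⧸ Rid) = 2 := by
  rw [e.toLinearEquiv.finrank_eq, (AdjoinRoot.powerBasis q2_ne).finrank]
  simp [AdjoinRoot.powerBasis, q2]

theorem example_radical_and_dimension :
    letI x : MvPolynomial (Fin 2) ℚ := X 0
    letI y : MvPolynomial (Fin 2) ℚ := X 1
    letI f₁ : MvPolynomial (Fin 2) ℚ :=
      (x^2 - 2) * (x^4 - 4*x^2 - y^4 - 5*y^3 - 9*y^2 - 7*y + 2)
    letI f₂ : MvPolynomial (Fin 2) ℚ := x^4 - 4*x^2 - y^3 - 3*y^2 - 3*y + 3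
    letI J : Ideal (MvPolynomial (Fin 2) ℚ) := Ideal.span {f₁, f₂}
    letI R : Ideal (MvPolynomial (Fin 2) ℚ) := Ideal.span {x^2 - 2, y + 1}
    J.radical = R ∧
      Module.finrank ℚ (MvPolynomial (Fin 2) ℚ ⧸ R) = 2 := by
  set x : MvPolynomial (Fin 2) ℚ := X 0 with hx
  set y : MvPolynomial (Fin 2) ℚ := X 1 with hy
  set f₁ : MvPolynomial (Fin 2) ℚ :=
      (x^2 - 2) * (x^4 - 4*x^2 - y^4 - 5*y^3 - 9*y^2 - 7*y + 2) with hf1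
  set f₂ : MvPolynomial (Fin 2) ℚ := x^4 - 4*x^2 - y^3 - 3*y^2 - 3*y + 3 with hf2
  set J : Ideal (MvPolynomial (Fin 2) ℚ) := Ideal.span {f₁, f₂} with hJ
  have hR : Ideal.span {x^2 - 2, y + 1} = Rid := rfl
  constructor
  · -- radical
    apply le_antisymm
    · -- J.radical ≤ R
      have hJR : J ≤ Rid := by
        rw [hJ, Ideal.span_le]
        rintro p hp
        simp only [Set.mem_insert_iff, Set.mem_singleton_iff] at hp
        rcases hp with rfl | rfl
        · exact Ideal.mem_span_pair.2
            ⟨x^4 - 4*x^2 - y^4 - 5*y^3 - 9*y^2 - 7*y + 2, 0, by ring⟩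
        · exact Ideal.mem_span_pair.2 ⟨x^2 - 2, -(y+1)^2, by ring⟩
      rw [hR]
      exact (Ideal.radical_mono hJR).trans_eq Rid_max.isPrime.radical
    · -- R ≤ J.radical
      rw [hR, Ideal.span_le]
      rintro p hp
      simp only [Set.mem_insert_iff, Set.mem_singleton_iff] at hp
      rcases hp with rfl | rfl
      · exact ⟨6, Ideal.mem_span_pair.2
          ⟨-((y+1)^2*(x^2-2)),
           (y+1)^2*((x^2-2)^2-(y+1)^4) + 3*(y+1)^6 + 3*(y+1)^3*f₂ + f₂^2,
           by rw [hf2]; ring⟩⟩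
      · exact ⟨7, Ideal.mem_span_pair.2
          ⟨-(x^2-2), (x^2-2)^2 - (y+1)^4, by rw [hf1, hf2]; ring⟩⟩
  · exact finrank_quot

end
end
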